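/- Let G be a finite simple graph with vertex set [K] = {1, …, K}, K ≥ 1, with independence number α (the maximum cardinality of an independent set of G). Let Δ : [K] → ℝ satisfy 0 < Δ_a ≤ 1 for every vertex a. For each positive integer φ let G_φ be the subgraph of G induced by the vertex set S_φ = {a ∈ [K] : 2^{−φ} < Δ_a ≤ 2^{−φ+1}}, and let M_φ = max over independent sets I of G_φ of ∑_{a∈I} 2^{φ} (with M_φ = 0 if S_φ is empty). Then for every positive integer Φ, ∑_{φ=1}^{Φ} M_φ ≤ 2 (log₂(α) + 3) · max over independent sets I of G of ∑_{a∈I} 1/Δ_a, where log₂ denotes the real base-2 logarithm. -/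

import Mathlib

theorem stmt_8 (K : ℕ) (hK : 1 ≤ K) (G : SimpleGraph (Fin K)) (Δ : Fin K → ℝ)
    (hΔ : ∀ a, 0 < Δ a ∧ Δ a ≤ 1) (α : ℕ)
    (hα : IsGreatest
      {n : ℕ | ∃ J : Finset (Fin K), (∀ a ∈ J, ∀ b ∈ J, a ≠ b → ¬ G.Adj a b) ∧ J.card = n} α)
    (Φ : ℕ) (hΦ : 0 < Φ) :
    ∑ φ ∈ Finset.Icc 1 Φ,
        sSup {x : ℝ | ∃ I : Finset (Fin K),
          (∀ a ∈ I, (2 : ℝ) ^ (-(φ : ℤ)) < Δ a ∧ Δ a ≤ (2 : ℝ) ^ (-(φ : ℤ) + 1)) ∧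
          (∀ a ∈ I, ∀ b ∈ I, a ≠ b → ¬ G.Adj a b) ∧
          x = ∑ _a ∈ I, (2 : ℝ) ^ φ}
      ≤ 2 * (Real.logb 2 α + 3) *
        sSup {x : ℝ | ∃ I : Finset (Fin K),
          (∀ a ∈ I, ∀ b ∈ I, a ≠ b → ¬ G.Adj a b) ∧ x = ∑ a ∈ I, 1 / Δ a} := by
  classical
  set B : Set ℝ := {x : ℝ | ∃ I : Finset (Fin K),
      (∀ a ∈ I, ∀ b ∈ I, a ≠ b → ¬ G.Adj a b) ∧ x = ∑ a ∈ I, 1 / Δ a} with hBdef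
  have hBfin : B.Finite :=
    Set.Finite.subset (Set.finite_range (fun I : Finset (Fin K) => ∑ a ∈ I, 1 / Δ a))
      (by rintro x ⟨I, -, rfl⟩; exact ⟨I, rfl⟩)
  have hBdd : BddAbove B := hBfin.bddAbove
  have hB0 : (0:ℝ) ∈ B := ⟨∅, by simp, by simp⟩
  set M : ℝ := sSup B with hMdef
  have hM0 : 0 ≤ M := le_csSup hBdd hB0
  have hα1 : 1 ≤ α := hα.2 ⟨{⟨0, hK⟩}, by simp, by simp⟩
  -- maximizers of each layer supremum
  have key : ∀ φ : ℕ, ∃ I : Finset (Fin K),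
      (∀ a ∈ I, (2 : ℝ) ^ (-(φ : ℤ)) < Δ a ∧ Δ a ≤ (2 : ℝ) ^ (-(φ : ℤ) + 1)) ∧
      (∀ a ∈ I, ∀ b ∈ I, a ≠ b → ¬ G.Adj a b) ∧
      sSup {x : ℝ | ∃ I : Finset (Fin K),
          (∀ a ∈ I, (2 : ℝ) ^ (-(φ : ℤ)) < Δ a ∧ Δ a ≤ (2 : ℝ) ^ (-(φ : ℤ) + 1)) ∧
          (∀ a ∈ I, ∀ b ∈ I, a ≠ b → ¬ G.Adj a b) ∧
          x = ∑ _a ∈ I, (2 : ℝ) ^ φ} = (I.card : ℝ) * 2 ^ φ := by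
    intro φ
    have hfin : Set.Finite {x : ℝ | ∃ I : Finset (Fin K),
        (∀ a ∈ I, (2 : ℝ) ^ (-(φ : ℤ)) < Δ a ∧ Δ a ≤ (2 : ℝ) ^ (-(φ : ℤ) + 1)) ∧
        (∀ a ∈ I, ∀ b ∈ I, a ≠ b → ¬ G.Adj a b) ∧
        x = ∑ _a ∈ I, (2 : ℝ) ^ φ} :=
      Set.Finite.subset (Set.finite_range (fun I : Finset (Fin K) => ∑ _a ∈ I, (2:ℝ) ^ φ))
        (by rintro x ⟨I, -, -, rfl⟩; exact ⟨I, rfl⟩)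
    have hne : Set.Nonempty {x : ℝ | ∃ I : Finset (Fin K),
        (∀ a ∈ I, (2 : ℝ) ^ (-(φ : ℤ)) < Δ a ∧ Δ a ≤ (2 : ℝ) ^ (-(φ : ℤ) + 1)) ∧
        (∀ a ∈ I, ∀ b ∈ I, a ≠ b → ¬ G.Adj a b) ∧
        x = ∑ _a ∈ I, (2 : ℝ) ^ φ} := ⟨0, ∅, by simp, by simp, by simp⟩
    obtain ⟨I, h1, h2, h3⟩ := hne.csSup_mem hfin
    exact ⟨I, h1, h2, by rw [h3]; simp [Finset.sum_const, nsmul_eq_mul]⟩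
  choose If hIS hIind hIsup using key
  set k : ℕ → ℕ := fun φ => (If φ).card with hkdef
  -- every layer independent set has size ≤ α
  have hkα : ∀ φ, k φ ≤ α := fun φ => hα.2 ⟨If φ, hIind φ, rfl⟩
  -- each layer value is at most 2M
  have hc2M : ∀ φ, (k φ : ℝ) * 2 ^ φ ≤ 2 * M := by
    intro φ
    have hmem : (∑ a ∈ If φ, 1 / Δ a) ∈ B := ⟨If φ, hIind φ, rfl⟩
    have h1 : (∑ a ∈ If φ, 1 / Δ a) ≤ M := le_csSup hBdd hmem
    have h2 : (k φ : ℝ) * (2 ^ φ / 2) ≤ ∑ a ∈ If φ, 1 / Δ a := by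
      have : ∀ a ∈ If φ, (2:ℝ) ^ φ / 2 ≤ 1 / Δ a := by
        intro a ha
        have hpos := (hΔ a).1
        have hle := (hIS φ a ha).2
        have h3 : (1:ℝ) / ((2 : ℝ) ^ (-(φ : ℤ) + 1)) ≤ 1 / Δ a :=
          one_div_le_one_div_of_le hpos hle
        calc (2:ℝ) ^ φ / 2 = (2:ℝ) ^ ((φ:ℤ) - 1) := by
              rw [zpow_sub₀ (by norm_num : (2:ℝ) ≠ 0)]
              simp [zpow_natCast]
          _ = 1 / ((2 : ℝ) ^ (-(φ : ℤ) + 1)) := by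
              rw [one_div, ← zpow_neg]; ring_nf
          _ ≤ 1 / Δ a := h3
      calc (k φ : ℝ) * (2 ^ φ / 2) = ∑ _a ∈ If φ, (2:ℝ) ^ φ / 2 := by
            simp [Finset.sum_const, nsmul_eq_mul]; rfl
        _ ≤ ∑ a ∈ If φ, 1 / Δ a := Finset.sum_le_sum this
    nlinarith [h2, h1]
  -- choose the maximizing layer m
  obtain ⟨m, hmmem, hmmax⟩ := Finset.exists_max_image (Finset.Icc 1 Φ)
    (fun φ => (k φ : ℝ) * 2 ^ φ) ⟨1, by simp [Finset.mem_Icc]; omega⟩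
  -- rewrite LHS
  rw [Finset.sum_congr rfl (fun φ _ => hIsup φ)]
  have hcnn : ∀ φ, (0:ℝ) ≤ (k φ : ℝ) * 2 ^ φ := fun φ => by positivity
  have hlog0 : (0:ℝ) ≤ Real.logb 2 α :=
    Real.logb_nonneg (by norm_num) (by exact_mod_cast hα1)
  by_cases hkm : k m = 0
  · -- trivial case: all layers empty
    have : ∀ φ ∈ Finset.Icc 1 Φ, (k φ : ℝ) * 2 ^ φ = 0 := by
      intro φ hφ
      have h := hmmax φ hφ
      rw [hkm] at h
      push_cast at h
      nlinarith [hcnn φ]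
    rw [Finset.sum_congr rfl this, Finset.sum_const_zero]
    positivity
  -- main case
  have hkm1 : 1 ≤ k m := Nat.one_le_iff_ne_zero.mpr hkm
  set L : ℕ := Nat.log 2 α with hLdef
  set Lm : ℕ := Nat.log 2 (k m) with hLmdef
  have hLm : (2:ℕ) ^ Lm ≤ k m := Nat.pow_log_le_self 2 hkm
  have hαL : α < 2 ^ (L + 1) := Nat.lt_pow_succ_log_self (by norm_num) α
  -- support bound
  have hsupp : ∀ φ ∈ Finset.Icc 1 Φ, m + Lm < φ → k φ = 0 := by
    intro φ hφ hgt
    by_contra hne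
    have hk1 : 1 ≤ k φ := Nat.one_le_iff_ne_zero.mpr hne
    have h1 : (2:ℝ) ^ φ ≤ (k m : ℝ) * 2 ^ m := by
      calc (2:ℝ) ^ φ = 1 * 2 ^ φ := by ring
        _ ≤ (k φ : ℝ) * 2 ^ φ := by
            apply mul_le_mul_of_nonneg_right _ (by positivity)
            exact_mod_cast hk1
        _ ≤ (k m : ℝ) * 2 ^ m := hmmax φ hφ
    have hmlt : m < φ := by omega
    have h2 : (2:ℝ) ^ (φ - m) ≤ (k m : ℝ) := by
      have hexp : (2:ℝ) ^ φ = 2 ^ m * 2 ^ (φ - m) := by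
        rw [← pow_add]; congr 1; omega
      rw [hexp] at h1
      have h2m : (0:ℝ) < 2 ^ m := by positivity
      nlinarith
    have h3 : (2:ℕ) ^ (φ - m) ≤ k m := by exact_mod_cast h2
    have h4 : φ - m ≤ Lm := (Nat.le_log_iff_pow_le (by norm_num) hkm).mpr h3
    omega
  -- split the sum
  set lo : ℕ := m + Lm - L with hlodef
  set c : ℕ → ℝ := fun φ => (k φ : ℝ) * 2 ^ φ with hcdef
  rw [← Finset.sum_filter_add_sum_filter_not (Finset.Icc 1 Φ) (fun φ => φ < lo) c,
      ← Finset.sum_filter_add_sum_filter_not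
        ((Finset.Icc 1 Φ).filter (fun φ => ¬ φ < lo)) (fun φ => φ ≤ m + Lm) c]
  have bound1 : ∑ φ ∈ (Finset.Icc 1 Φ).filter (fun φ => φ < lo), c φ ≤ 4 * M := by
    by_cases hL : L ≤ m + Lm
    · have hsub : (Finset.Icc 1 Φ).filter (fun φ => φ < lo) ⊆ Finset.range lo := by
        intro φ hφ
        simp only [Finset.mem_filter] at hφ
        exact Finset.mem_range.mpr hφ.2
      have h1 : ∑ φ ∈ (Finset.Icc 1 Φ).filter (fun φ => φ < lo), c φ
          ≤ ∑ φ ∈ Finset.range lo, (α : ℝ) * 2 ^ φ := by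
        apply Finset.sum_le_sum_of_subset_of_nonneg hsub (fun φ _ _ => by positivity) |>.trans'
        apply Finset.sum_le_sum
        intro φ _
        apply mul_le_mul_of_nonneg_right _ (by positivity)
        exact_mod_cast hkα φ
      have hgs : ∑ φ ∈ Finset.range lo, (2:ℝ) ^ φ = 2 ^ lo - 1 := by
        rw [geom_sum_eq (by norm_num)]; norm_num
      have h2 : ∑ φ ∈ Finset.range lo, (α:ℝ) * 2 ^ φ ≤ (α:ℝ) * 2 ^ lo := by
        rw [← Finset.mul_sum, hgs]
        have hαnn : (0:ℝ) ≤ (α:ℝ) := by positivity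
        nlinarith
      have h3 : (α:ℝ) ≤ 2 ^ (L + 1) := by exact_mod_cast hαL.le
      have h4 : (2:ℝ) ^ (L + 1) * 2 ^ lo = 2 * 2 ^ Lm * 2 ^ m := by
        rw [← pow_add, show L + 1 + lo = 1 + Lm + m by omega, pow_add, pow_add, pow_one]
      have h5 : (2:ℝ) ^ Lm ≤ (k m : ℝ) := by exact_mod_cast hLm
      have h6 := hc2M m
      have h2m : (0:ℝ) ≤ 2 ^ m := by positivity
      calc ∑ φ ∈ (Finset.Icc 1 Φ).filter (fun φ => φ < lo), c φ
          ≤ ∑ φ ∈ Finset.range lo, (α : ℝ) * 2 ^ φ := h1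
        _ ≤ (α:ℝ) * 2 ^ lo := h2
        _ ≤ (2:ℝ) ^ (L + 1) * 2 ^ lo := mul_le_mul_of_nonneg_right h3 (by positivity)
        _ = 2 * 2 ^ Lm * 2 ^ m := h4
        _ ≤ 2 * ((k m : ℝ) * 2 ^ m) := by nlinarith
        _ ≤ 4 * M := by nlinarith
    · have : (Finset.Icc 1 Φ).filter (fun φ => φ < lo) = ∅ := by
        apply Finset.filter_false_of_mem
        intro φ hφ
        have : lo = 0 := by omega
        omega
      rw [this]; simp; positivity
  have bound2 : ∑ φ ∈ ((Finset.Icc 1 Φ).filter (fun φ => ¬ φ < lo)).filter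
      (fun φ => φ ≤ m + Lm), c φ ≤ ((L:ℝ) + 1) * (2 * M) := by
    set s2 := ((Finset.Icc 1 Φ).filter (fun φ => ¬ φ < lo)).filter (fun φ => φ ≤ m + Lm)
      with hs2def
    have hsub : s2 ⊆ Finset.Icc lo (m + Lm) := by
      intro φ hφ
      simp only [hs2def, Finset.mem_filter, Finset.mem_Icc] at hφ ⊢
      omega
    have hcard : s2.card ≤ L + 1 := by
      have h := Finset.card_le_card hsub
      rw [Nat.card_Icc] at h
      omega
    have hbound := Finset.sum_le_card_nsmul s2 c (2 * M) (fun φ _ => hc2M φ)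
    rw [nsmul_eq_mul] at hbound
    calc ∑ φ ∈ s2, c φ ≤ (s2.card : ℝ) * (2 * M) := hbound
      _ ≤ ((L:ℝ) + 1) * (2 * M) := by
          have hc : (s2.card : ℝ) ≤ (L:ℝ) + 1 := by exact_mod_cast hcard
          nlinarith [hM0]
  have bound3 : ∑ φ ∈ ((Finset.Icc 1 Φ).filter (fun φ => ¬ φ < lo)).filter
      (fun φ => ¬ φ ≤ m + Lm), c φ = 0 := by
    apply Finset.sum_eq_zero
    intro φ hφ
    simp only [Finset.mem_filter] at hφ
    have := hsupp φ hφ.1.1 (by omega)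
    simp [hcdef, this]
  have hLlog : (L:ℝ) ≤ Real.logb 2 α := by
    have h1 : (2:ℝ) ^ L ≤ (α:ℝ) := by exact_mod_cast Nat.pow_log_le_self 2 (by omega)
    calc (L:ℝ) = Real.logb 2 ((2:ℝ) ^ L) := by
          rw [Real.logb_pow]; simp
      _ ≤ Real.logb 2 α := Real.logb_le_logb_of_le (by norm_num) (by positivity) h1
  calc (∑ φ ∈ (Finset.Icc 1 Φ).filter (fun φ => φ < lo), c φ)
        + ((∑ φ ∈ ((Finset.Icc 1 Φ).filter (fun φ => ¬ φ < lo)).filter (fun φ => φ ≤ m + Lm), c φ)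
        + ∑ φ ∈ ((Finset.Icc 1 Φ).filter (fun φ => ¬ φ < lo)).filter (fun φ => ¬ φ ≤ m + Lm), c φ)
      ≤ 4 * M + (((L:ℝ) + 1) * (2 * M) + 0) := by
        gcongr
        exact bound3.le
    _ ≤ 2 * (Real.logb 2 α + 3) * M := by nlinarith
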